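/- Let M₁ = [[a₁,b₁],[c₁,d₁]] and M₂ = [[a₂,b₂],[c₂,d₂]] be hyperbolic matrices in SL(2,ℝ), and for i = 1,2 let ℓ_{Mᵢ} = {z ∈ ℂ : Im z > 0 and cᵢ|z|² + (dᵢ−aᵢ)·Re z − bᵢ = 0} be the root geodesic of Mᵢ (the geodesic joining the two real fixed points of the Möbius transformation of Mᵢ). Then ℓ_{M₁} and ℓ_{M₂} intersect in exactly one point of the upper half-plane if and only if det(M₁M₂ − M₂M₁) > 0. -/
import Mathlib
set_option maxHeartbeats 1000000


abbrev SL2R := Matrix.SpecialLinearGroup (Fin 2) ℝ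

/-- The root geodesic of a hyperbolic `M = [[a,b],[c,d]] ∈ SL(2,ℝ)`: the set of
upper half plane points `z` with `c|z|² + (d-a)·Re z - b = 0` (the geodesic
joining the two real fixed points of the Möbius transformation of `M`). -/
def matRootGeodesic (M : SL2R) : Set ℂ :=
  {z : ℂ | 0 < z.im ∧
    (M.1 1 0) * Complex.normSq z + (M.1 1 1 - M.1 0 0) * z.re - M.1 0 1 = 0}


/-- Abstract key lemma about the curves `c|z|²+m·Re z−b=0` in the upper half plane. -/
lemma geodesic_key (c₁ m₁ b₁ c₂ m₂ b₂ : ℝ)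
    (hQ₁ : 0 < m₁ ^ 2 + 4 * b₁ * c₁) (hQ₂ : 0 < m₂ ^ 2 + 4 * b₂ * c₂) :
    (∃! z : ℂ, (0 < z.im ∧ c₁ * Complex.normSq z + m₁ * z.re - b₁ = 0) ∧
        (0 < z.im ∧ c₂ * Complex.normSq z + m₂ * z.re - b₂ = 0)) ↔
      (m₁ * m₂ + 2 * b₁ * c₂ + 2 * b₂ * c₁) ^ 2
        < (m₁ ^ 2 + 4 * b₁ * c₁) * (m₂ ^ 2 + 4 * b₂ * c₂) := by
  have hident : (m₁ ^ 2 + 4 * b₁ * c₁) * (m₂ ^ 2 + 4 * b₂ * c₂)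
      - (m₁ * m₂ + 2 * b₁ * c₂ + 2 * b₂ * c₁) ^ 2
      = 4 * ((b₁ * m₂ - b₂ * m₁) * (c₁ * m₂ - c₂ * m₁) - (b₂ * c₁ - b₁ * c₂) ^ 2) := by
    ring
  rw [show ((m₁ * m₂ + 2 * b₁ * c₂ + 2 * b₂ * c₁) ^ 2
        < (m₁ ^ 2 + 4 * b₁ * c₁) * (m₂ ^ 2 + 4 * b₂ * c₂)) ↔
        (b₂ * c₁ - b₁ * c₂) ^ 2 < (b₁ * m₂ - b₂ * m₁) * (c₁ * m₂ - c₂ * m₁) by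
      constructor <;> intro h <;> linarith [hident]]
  constructor
  · -- unique intersection → w₂² < w₁w₃
    rintro ⟨z, ⟨⟨hzim, hz1⟩, ⟨_, hz2⟩⟩, huniq⟩
    by_contra hn
    push_neg at hn
    have hρ : Complex.normSq z = z.re ^ 2 + z.im ^ 2 := by
      simp [Complex.normSq_apply]; ring
    have hx : (c₁ * m₂ - c₂ * m₁) * z.re = b₂ * c₁ - b₁ * c₂ := by
      linear_combination c₁ * hz2 - c₂ * hz1
    have hρ' : (c₁ * m₂ - c₂ * m₁) * Complex.normSq z = b₁ * m₂ - b₂ * m₁ := by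
      linear_combination m₂ * hz1 - m₁ * hz2
    have hkey : (c₁ * m₂ - c₂ * m₁) ^ 2 * z.im ^ 2
        = (b₁ * m₂ - b₂ * m₁) * (c₁ * m₂ - c₂ * m₁) - (b₂ * c₁ - b₁ * c₂) ^ 2 := by
      linear_combination (c₁ * m₂ - c₂ * m₁) * hρ'
        - ((c₁ * m₂ - c₂ * m₁) * z.re + (b₂ * c₁ - b₁ * c₂)) * hx
        - (c₁ * m₂ - c₂ * m₁) ^ 2 * hρ
    have him2 : 0 < z.im ^ 2 := by positivity
    have h3sq : (c₁ * m₂ - c₂ * m₁) ^ 2 ≤ 0 := by nlinarith [hkey, hn, him2]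
    have h3 : c₁ * m₂ - c₂ * m₁ = 0 :=
      (pow_eq_zero_iff two_ne_zero).mp (le_antisymm h3sq (sq_nonneg _))
    have h2 : b₂ * c₁ - b₁ * c₂ = 0 := by rw [← hx, h3, zero_mul]
    have h1 : b₁ * m₂ - b₂ * m₁ = 0 := by rw [← hρ', h3, zero_mul]
    -- produce two distinct common points, contradicting uniqueness
    obtain ⟨p, q, hpq, hp, hq⟩ :
        ∃ p q : ℂ, p ≠ q ∧
          ((0 < p.im ∧ c₁ * Complex.normSq p + m₁ * p.re - b₁ = 0) ∧
            (0 < p.im ∧ c₂ * Complex.normSq p + m₂ * p.re - b₂ = 0)) ∧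
          ((0 < q.im ∧ c₁ * Complex.normSq q + m₁ * q.re - b₁ = 0) ∧
            (0 < q.im ∧ c₂ * Complex.normSq q + m₂ * q.re - b₂ = 0)) := by
      by_cases hc : c₁ = 0
      · -- line case : c₁ = 0, so m₁ ≠ 0, c₂ = 0
        have hm : m₁ ≠ 0 := by
          intro hm
          rw [hc, hm] at hQ₁
          nlinarith
        have hc2 : c₂ = 0 := by
          rw [hc] at h3
          have hcm : c₂ * m₁ = 0 := by linarith
          rcases mul_eq_zero.mp hcm with h | h
          · exact h
          · exact absurd h hm
        have e1 : ∀ y : ℝ, c₁ * Complex.normSq ⟨b₁ / m₁, y⟩ + m₁ * (b₁ / m₁) - b₁ = 0 := by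
          intro y
          rw [hc, mul_div_cancel₀ _ hm]
          ring
        have e2 : ∀ y : ℝ, c₂ * Complex.normSq ⟨b₁ / m₁, y⟩ + m₂ * (b₁ / m₁) - b₂ = 0 := by
          intro y
          rw [hc2]
          have : m₂ * (b₁ / m₁) = b₂ := by
            field_simp
            linarith [h1]
          rw [this]
          ring
        exact ⟨⟨b₁ / m₁, 1⟩, ⟨b₁ / m₁, 2⟩,
          by intro h; exact absurd (congrArg Complex.im h : (1:ℝ) = 2) (by norm_num),
          ⟨⟨one_pos, e1 1⟩, ⟨one_pos, e2 1⟩⟩, ⟨⟨two_pos, e1 2⟩, ⟨two_pos, e2 2⟩⟩⟩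
      · -- circle case : c₁ ≠ 0
        set r : ℝ := Real.sqrt ((m₁ ^ 2 + 4 * b₁ * c₁) / (4 * c₁ ^ 2)) with hrdef
        have hrpos : 0 < r := Real.sqrt_pos.2 (by positivity)
        have hr2 : 4 * c₁ ^ 2 * r ^ 2 = m₁ ^ 2 + 4 * b₁ * c₁ := by
          rw [hrdef, Real.sq_sqrt (by positivity : (0:ℝ) ≤ (m₁ ^ 2 + 4 * b₁ * c₁) / (4 * c₁ ^ 2))]
          field_simp
        -- any point on the circle satisfies equation 1
        have key1 : ∀ x y : ℝ, (2 * c₁ * x + m₁) ^ 2 + (2 * c₁ * y) ^ 2 = 4 * c₁ ^ 2 * r ^ 2 →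
            c₁ * (x ^ 2 + y ^ 2) + m₁ * x - b₁ = 0 := by
          intro x y hxy
          have h4 : (4 * c₁) * (c₁ * (x ^ 2 + y ^ 2) + m₁ * x - b₁) = 0 := by
            linear_combination hxy + hr2
          rcases mul_eq_zero.mp h4 with h | h
          · exact absurd h (by simpa using hc)
          · exact h
        -- equation 1 implies equation 2 (proportional coefficients)
        have key2 : ∀ x y : ℝ,
            c₁ * (x ^ 2 + y ^ 2) + m₁ * x - b₁ = 0 →
            c₂ * (x ^ 2 + y ^ 2) + m₂ * x - b₂ = 0 := by
          intro x y h'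
          have h4 : c₁ * (c₂ * (x ^ 2 + y ^ 2) + m₂ * x - b₂) = 0 := by
            linear_combination c₂ * h' + x * h3 - h2
          rcases mul_eq_zero.mp h4 with h | h
          · exact absurd h hc
          · exact h
        have hre1 : (2 * c₁ * (-m₁ / (2 * c₁)) + m₁) = 0 := by
          field_simp
          ring
        have hmem1 : ∀ β : ℝ, (2 * c₁ * (-m₁ / (2 * c₁) + β * r) + m₁) = 2 * c₁ * β * r := by
          intro β
          field_simp
          ring
        have hp1 : c₁ * ((-m₁ / (2 * c₁)) ^ 2 + r ^ 2) + m₁ * (-m₁ / (2 * c₁)) - b₁ = 0 := by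
          apply key1
          rw [hre1]
          ring
        have hq1 : c₁ * ((-m₁ / (2 * c₁) + (3 / 5) * r) ^ 2 + (4 * r / 5) ^ 2)
            + m₁ * (-m₁ / (2 * c₁) + (3 / 5) * r) - b₁ = 0 := by
          apply key1
          rw [hmem1 (3 / 5)]
          ring
        refine ⟨⟨-m₁ / (2 * c₁), r⟩, ⟨-m₁ / (2 * c₁) + (3 / 5) * r, 4 * r / 5⟩, ?_, ?_, ?_⟩
        · intro h
          have h' : r = 4 * r / 5 := congrArg Complex.im h
          linarith
        · refine ⟨⟨hrpos, ?_⟩, ⟨hrpos, ?_⟩⟩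
          · simpa [Complex.normSq_mk, ← sq] using hp1
          · simpa [Complex.normSq_mk, ← sq] using key2 _ _ hp1
        · have him : 0 < 4 * r / 5 := by linarith
          refine ⟨⟨him, ?_⟩, ⟨him, ?_⟩⟩
          · simpa [Complex.normSq_mk, ← sq] using hq1
          · simpa [Complex.normSq_mk, ← sq] using key2 _ _ hq1
    exact hpq ((huniq p hp).trans (huniq q hq).symm)
  · -- w₂² < w₁w₃ → unique intersection
    intro h
    have h3 : c₁ * m₂ - c₂ * m₁ ≠ 0 := by
      intro h3
      rw [h3] at h
      nlinarith
    set x : ℝ := (b₂ * c₁ - b₁ * c₂) / (c₁ * m₂ - c₂ * m₁) with hxdef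
    set ρ : ℝ := (b₁ * m₂ - b₂ * m₁) / (c₁ * m₂ - c₂ * m₁) with hρdef
    have hx1 : (c₁ * m₂ - c₂ * m₁) * x = b₂ * c₁ - b₁ * c₂ := by
      rw [hxdef]; field_simp
    have hρ1 : (c₁ * m₂ - c₂ * m₁) * ρ = b₁ * m₂ - b₂ * m₁ := by
      rw [hρdef]; field_simp
    have hpos : 0 < ρ - x ^ 2 := by
      have e : (c₁ * m₂ - c₂ * m₁) ^ 2 * (ρ - x ^ 2)
          = ((b₁ * m₂ - b₂ * m₁) * (c₁ * m₂ - c₂ * m₁) - (b₂ * c₁ - b₁ * c₂) ^ 2) := by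
        linear_combination (c₁ * m₂ - c₂ * m₁) * hρ1
          - ((c₁ * m₂ - c₂ * m₁) * x + (b₂ * c₁ - b₁ * c₂)) * hx1
      have h2 : 0 < (c₁ * m₂ - c₂ * m₁) ^ 2 := by positivity
      nlinarith [e, h, h2]
    set y : ℝ := Real.sqrt (ρ - x ^ 2) with hydef
    have hypos : 0 < y := Real.sqrt_pos.2 hpos
    have hy2 : y ^ 2 = ρ - x ^ 2 := Real.sq_sqrt hpos.le
    have hns : Complex.normSq ⟨x, y⟩ = ρ := by
      simp only [Complex.normSq_mk]
      nlinarith [hy2]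
    have heq : ∀ c m b : ℝ, c * (b₁ * m₂ - b₂ * m₁) + m * (b₂ * c₁ - b₁ * c₂)
        - b * (c₁ * m₂ - c₂ * m₁) = 0 → c * Complex.normSq ⟨x, y⟩ + m * x - b = 0 := by
      intro c m b hcmb
      rw [hns]
      have h4 : (c₁ * m₂ - c₂ * m₁) * (c * ρ + m * x - b) = 0 := by
        linear_combination c * hρ1 + m * hx1 + hcmb
      rcases mul_eq_zero.mp h4 with h' | h'
      · exact absurd h' h3
      · exact h'
    refine ⟨⟨x, y⟩, ⟨⟨hypos, heq c₁ m₁ b₁ (by ring)⟩, ⟨hypos, heq c₂ m₂ b₂ (by ring)⟩⟩, ?_⟩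
    rintro z ⟨⟨hzim, hz1⟩, ⟨_, hz2⟩⟩
    have hx' : (c₁ * m₂ - c₂ * m₁) * z.re = b₂ * c₁ - b₁ * c₂ := by
      linear_combination c₁ * hz2 - c₂ * hz1
    have hρ' : (c₁ * m₂ - c₂ * m₁) * Complex.normSq z = b₁ * m₂ - b₂ * m₁ := by
      linear_combination m₂ * hz1 - m₁ * hz2
    have hxe : z.re = x := mul_left_cancel₀ h3 (hx'.trans hx1.symm)
    have hρe : Complex.normSq z = ρ := mul_left_cancel₀ h3 (hρ'.trans hρ1.symm)
    have hime : z.im = y := by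
      have hnsz : Complex.normSq z = z.re ^ 2 + z.im ^ 2 := by
        simp [Complex.normSq_apply]; ring
      have hsq : z.im ^ 2 = y ^ 2 := by
        rw [hy2]; rw [hnsz, hxe] at hρe; linarith
      nlinarith [hzim, hypos, hsq]
    exact Complex.ext hxe hime

/-- Proposition 6(i) of the paper.
The root geodesics of two hyperbolic matrices `M₁, M₂ ∈ SL(2,ℝ)` intersect in
exactly one point of the upper half plane iff `det(M₁M₂ - M₂M₁) > 0`. -/
theorem matRootGeodesics_unique_intersection_iff_det_pos
    (M₁ M₂ : SL2R)
    (h₁ : 2 < |Matrix.trace (M₁ : Matrix (Fin 2) (Fin 2) ℝ)|)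
    (h₂ : 2 < |Matrix.trace (M₂ : Matrix (Fin 2) (Fin 2) ℝ)|) :
    (∃! z : ℂ, z ∈ matRootGeodesic M₁ ∧ z ∈ matRootGeodesic M₂) ↔
      0 < ((M₁ : Matrix (Fin 2) (Fin 2) ℝ) * (M₂ : Matrix (Fin 2) (Fin 2) ℝ)
            - (M₂ : Matrix (Fin 2) (Fin 2) ℝ) * (M₁ : Matrix (Fin 2) (Fin 2) ℝ)).det := by

  set a₁ := M₁.1 0 0 with ha₁
  set b₁ := M₁.1 0 1 with hb₁
  set c₁ := M₁.1 1 0 with hc₁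
  set d₁ := M₁.1 1 1 with hd₁
  set a₂ := M₂.1 0 0 with ha₂
  set b₂ := M₂.1 0 1 with hb₂
  set c₂ := M₂.1 1 0 with hc₂
  set d₂ := M₂.1 1 1 with hd₂
  have hdet₁ : a₁ * d₁ - b₁ * c₁ = 1 := by
    have := M₁.2
    rwa [Matrix.det_fin_two] at this
  have hdet₂ : a₂ * d₂ - b₂ * c₂ = 1 := by
    have := M₂.2
    rwa [Matrix.det_fin_two] at this
  rw [Matrix.trace_fin_two] at h₁ h₂
  have htr₁ : 4 < (a₁ + d₁) ^ 2 := by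
    nlinarith [sq_abs (a₁ + d₁), abs_nonneg (a₁ + d₁)]
  have htr₂ : 4 < (a₂ + d₂) ^ 2 := by
    nlinarith [sq_abs (a₂ + d₂), abs_nonneg (a₂ + d₂)]
  have hQ₁ : 0 < (d₁ - a₁) ^ 2 + 4 * b₁ * c₁ := by nlinarith
  have hQ₂ : 0 < (d₂ - a₂) ^ 2 + 4 * b₂ * c₂ := by nlinarith
  have hdetc : ((M₁ : Matrix (Fin 2) (Fin 2) ℝ) * (M₂ : Matrix (Fin 2) (Fin 2) ℝ)
            - (M₂ : Matrix (Fin 2) (Fin 2) ℝ) * (M₁ : Matrix (Fin 2) (Fin 2) ℝ)).det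
      = (((d₁ - a₁) ^ 2 + 4 * b₁ * c₁) * ((d₂ - a₂) ^ 2 + 4 * b₂ * c₂)
          - ((d₁ - a₁) * (d₂ - a₂) + 2 * b₁ * c₂ + 2 * b₂ * c₁) ^ 2) / 4 := by
    rw [Matrix.det_fin_two]
    simp only [Matrix.sub_apply, Matrix.mul_apply, Fin.sum_univ_two,
      ← ha₁, ← hb₁, ← hc₁, ← hd₁, ← ha₂, ← hb₂, ← hc₂, ← hd₂]
    ring
  have hmem : ∀ z : ℂ, (z ∈ matRootGeodesic M₁ ∧ z ∈ matRootGeodesic M₂) ↔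
      ((0 < z.im ∧ c₁ * Complex.normSq z + (d₁ - a₁) * z.re - b₁ = 0) ∧
        (0 < z.im ∧ c₂ * Complex.normSq z + (d₂ - a₂) * z.re - b₂ = 0)) := by
    intro z
    rfl
  rw [show (∃! z : ℂ, z ∈ matRootGeodesic M₁ ∧ z ∈ matRootGeodesic M₂) ↔
      (∃! z : ℂ, (0 < z.im ∧ c₁ * Complex.normSq z + (d₁ - a₁) * z.re - b₁ = 0) ∧
        (0 < z.im ∧ c₂ * Complex.normSq z + (d₂ - a₂) * z.re - b₂ = 0)) from
    existsUnique_congr hmem]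
  rw [geodesic_key c₁ (d₁ - a₁) b₁ c₂ (d₂ - a₂) b₂ hQ₁ hQ₂, hdetc]
  constructor
  · intro h
    linarith
  · intro h
    linarith
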